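/- Let M be a d×d real matrix with det M > 0. If (det(MS))^(1/d) ≤ (1/d)·trace(MS) holds for every d×d real symmetric positive definite matrix S, then M is symmetric positive definite. -/

import Mathlib

open Matrix

lemma aux_posDef {n : Type*} [Fintype n] [DecidableEq n] {A : Matrix n n ℝ}
    (hA : A.PosSemidef) (hdet : A.det ≠ 0) : A.PosDef := by
  exact hA.posDef_iff_det_ne_zero.mpr hdet

theorem stmt4 (d : ℕ) (hd : 1 ≤ d)
    (M : Matrix (Fin d) (Fin d) ℝ) (hdet : 0 < M.det)
    (h : ∀ S : Matrix (Fin d) (Fin d) ℝ, S.PosDef →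
      (M * S).det ^ ((1 : ℝ) / d) ≤ (1 / d : ℝ) * (M * S).trace) :
    M.PosDef := by
  have hdpos : (0 : ℝ) < d := by positivity
  -- A = Mᴴ M is positive definite
  have hA : (Mᴴ * M).PosSemidef := Matrix.posSemidef_conjTranspose_mul_self M
  have hdetA : (Mᴴ * M).det ≠ 0 := by
    rw [Matrix.det_mul, Matrix.det_conjTranspose]
    simp only [star_trivial]
    positivity
  -- H = sqrt A
  open scoped MatrixOrder in
  set H := CFC.sqrt (Mᴴ * M) with hHdef
  have hHs : H.PosSemidef := by
    open scoped MatrixOrder in exact (CFC.sqrt_nonneg _).posSemidef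
  have hHH : H * H = Mᴴ * M := by
    open scoped MatrixOrder in exact CFC.sqrt_mul_sqrt_self _ hA.nonneg
  have hdetH : H.det ≠ 0 := by
    intro h0
    apply hdetA
    rw [← hHH, Matrix.det_mul, h0, zero_mul]
  have hHpd : H.PosDef := aux_posDef hHs hdetH
  have hdetHpos : 0 < H.det := hHpd.det_pos
  have hHinv : (H⁻¹).PosDef := hHpd.inv
  have hHinvH : H⁻¹ * H = 1 := Matrix.nonsing_inv_mul H (isUnit_iff_ne_zero.mpr hdetH)
  have hHHinv : H * H⁻¹ = 1 := Matrix.mul_nonsing_inv H (isUnit_iff_ne_zero.mpr hdetH)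
  set Q := M * H⁻¹ with hQdef
  -- Q is orthogonal
  have hHinvSym : (H⁻¹)ᴴ = H⁻¹ := (hHinv.isHermitian).eq
  have hQQ : Qᴴ * Q = 1 := by
    rw [hQdef, Matrix.conjTranspose_mul, hHinvSym]
    calc H⁻¹ * Mᴴ * (M * H⁻¹) = H⁻¹ * (Mᴴ * M) * H⁻¹ := by simp only [Matrix.mul_assoc]
    _ = H⁻¹ * (H * H) * H⁻¹ := by rw [hHH]
    _ = (H⁻¹ * H) * (H * H⁻¹) := by rw [Matrix.mul_assoc, Matrix.mul_assoc, Matrix.mul_assoc]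
    _ = 1 := by rw [hHinvH, hHHinv, one_mul]
  -- det Q = 1
  have hdetQpos : 0 < Q.det := by
    rw [hQdef, Matrix.det_mul, Matrix.det_nonsing_inv]
    exact mul_pos hdet (by rw [Ring.inverse_eq_inv']; positivity)
  have hdetQ : Q.det = 1 := by
    have h2 : Q.det * Q.det = 1 := by
      have := congrArg Matrix.det hQQ
      rwa [Matrix.det_mul, Matrix.det_conjTranspose, star_trivial, Matrix.det_one] at this
    nlinarith
  -- apply hypothesis with S = H⁻¹
  have key := h H⁻¹ hHinv
  rw [← hQdef, hdetQ, Real.one_rpow] at key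
  have htr : (d : ℝ) ≤ Q.trace := by
    rw [one_div, inv_mul_eq_div, le_div_iff₀ hdpos, one_mul] at key
    exact key
  -- diagonal entries of Q are ≤ 1
  have hcol : ∀ i, ∑ k, Q k i ^ 2 = 1 := by
    intro i
    have := congrFun (congrFun hQQ i) i
    simp only [Matrix.mul_apply, Matrix.conjTranspose_apply, star_trivial,
      Matrix.one_apply_eq] at this
    convert this using 1
    exact Finset.sum_congr rfl fun k _ => (sq (Q k i)).symm ▸ by ring
  have hdiag_le : ∀ i, Q i i ≤ 1 := by
    intro i
    have h1 : Q i i ^ 2 ≤ 1 := by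
      rw [← hcol i]
      exact Finset.single_le_sum (f := fun k => Q k i ^ 2)
        (fun k _ => sq_nonneg _) (Finset.mem_univ i)
    nlinarith
  -- so all diagonal entries are 1
  have hdiag : ∀ i, Q i i = 1 := by
    by_contra hc
    push_neg at hc
    obtain ⟨i, hi⟩ := hc
    have : Q.trace < d := by
      rw [Matrix.trace]
      calc ∑ k, Q.diag k < ∑ k : Fin d, (1 : ℝ) :=
        Finset.sum_lt_sum (fun k _ => hdiag_le k) ⟨i, Finset.mem_univ i, lt_of_le_of_ne (hdiag_le i) hi⟩
      _ = d := by simp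
    linarith
  -- Q = 1
  have hQ1 : Q = 1 := by
    ext i j
    rcases eq_or_ne i j with rfl | hij
    · rw [hdiag i, Matrix.one_apply_eq]
    · rw [Matrix.one_apply_ne hij]
      have h0 : ∑ k, Q k j ^ 2 = 1 := hcol j
      have : Q i j ^ 2 = 0 := by
        have hsplit : ∑ k, Q k j ^ 2 = Q j j ^ 2 + ∑ k ∈ Finset.univ.erase j, Q k j ^ 2 := by
          exact (Finset.add_sum_erase _ (fun k => Q k j ^ 2) (Finset.mem_univ j)).symm
        rw [hsplit, hdiag j, one_pow] at h0
        have hrest : ∑ k ∈ Finset.univ.erase j, Q k j ^ 2 = 0 := by linarith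
        have := (Finset.sum_eq_zero_iff_of_nonneg (fun k _ => sq_nonneg (Q k j))).mp hrest
        exact this i (Finset.mem_erase.mpr ⟨hij, Finset.mem_univ i⟩)
      exact pow_eq_zero_iff (n := 2) (by norm_num) |>.mp this
  -- conclude M = H
  have hMH : M = H := by
    calc M = M * (H⁻¹ * H) := by rw [hHinvH, Matrix.mul_one]
    _ = Q * H := by rw [← Matrix.mul_assoc, ← hQdef]
    _ = H := by rw [hQ1, Matrix.one_mul]
  rw [hMH]
  exact hHpd
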